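/- There exists a constant ξ0 ∈ (1/2, 1), depending only on λ and μ, such that for every ω with 0 < ω ≤ π/2, the equation sin²(zω) = K₁ − K z² sin²ω has no solution z ∈ ℂ with Re z ∈ (0, ξ0). -/
import Mathlib
set_option maxHeartbeats 1000000


/-- Numeric upper bound for `sin 0.8663`. -/
lemma sin_0_8663_le : Real.sin 0.8663 ≤ 0.7873 := by
  have h := le_of_abs_le (Real.sin_bound (x := 0.8663) (by rw [abs_of_pos] <;> norm_num))
  have habs : |(0.8663 : ℝ)| = 0.8663 := by norm_num
  rw [habs] at h
  norm_num at h
  linarith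

/-- There is `ξ0 ∈ (1/2, 1)`, depending only on the Lamé constants `λ` and `μ`
(with `μ > 0` and `λ + μ > 0`), such that for every angle `0 < ω ≤ π/2` the equation
`sin²(zω) = K₁ - K z² sin²ω`, with `K = (λ+μ)/(λ+3μ)` and `K₁ = (λ+2μ)²/((λ+μ)(λ+3μ))`,
has no complex solution `z` with `Re z ∈ (0, ξ0)`. -/
theorem stmt_9 (μ lam : ℝ) (hμ : 0 < μ) (hlm : 0 < lam + μ) :
    ∃ ξ0 : ℝ, 1 / 2 < ξ0 ∧ ξ0 < 1 ∧
      ∀ ω : ℝ, 0 < ω → ω ≤ Real.pi / 2 →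
        ∀ z : ℂ, 0 < z.re → z.re < ξ0 →
          Complex.sin (z * (ω : ℂ)) ^ 2 ≠
            (((lam + 2 * μ) ^ 2 / ((lam + μ) * (lam + 3 * μ)) : ℝ) : ℂ) -
              (((lam + μ) / (lam + 3 * μ) : ℝ) : ℂ) * z ^ 2 * ((Real.sin ω : ℝ) : ℂ) ^ 2 := by
  refine ⟨0.55, by norm_num, by norm_num, ?_⟩
  intro ω hω hωπ z hx hxξ heq
  have hπ : (3.14 : ℝ) < Real.pi := by
    have := Real.pi_gt_d6; linarith
  have hπ' : Real.pi < 3.15 := by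
    have := Real.pi_lt_d2; linarith
  have hlm3 : 0 < lam + 3 * μ := by linarith
  obtain ⟨K, hKdef⟩ : ∃ t : ℝ, t = (lam + μ) / (lam + 3 * μ) := ⟨_, rfl⟩
  obtain ⟨K₁, hK1def⟩ : ∃ t : ℝ, t = (lam + 2 * μ) ^ 2 / ((lam + μ) * (lam + 3 * μ)) := ⟨_, rfl⟩
  rw [← hKdef, ← hK1def] at heq
  have hK0 : 0 < K := hKdef ▸ div_pos hlm hlm3
  have hK1 : K < 1 := hKdef ▸ (div_lt_one hlm3).2 (by linarith)
  have hK₁ : 1 < K₁ := by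
    rw [hK1def, lt_div_iff₀ (by positivity)]
    nlinarith
  have ha0 : 0 < z.re * ω := mul_pos hx hω
  have haub : z.re * ω < 0.8663 := by
    have h1 : z.re * ω < 0.55 * ω := by nlinarith
    nlinarith
  have hsinω : 0 < Real.sin ω := Real.sin_pos_of_pos_of_lt_pi hω (by linarith)
  have hz : (z * (ω : ℂ)) = ((z.re * ω : ℝ) : ℂ) + ((z.im * ω : ℝ) : ℂ) * Complex.I := by
    apply Complex.ext <;> simp [Complex.mul_re, Complex.mul_im]
  rw [hz, Complex.sin_add_mul_I, ← Complex.ofReal_sin, ← Complex.ofReal_cos,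
    ← Complex.ofReal_cosh, ← Complex.ofReal_sinh] at heq
  have him := congrArg Complex.im heq
  have hre := congrArg Complex.re heq
  set s := Real.sin (z.re * ω) with hsdef
  set c := Real.cos (z.re * ω) with hcdef
  set S := Real.sinh (z.im * ω) with hSdef
  set C := Real.cosh (z.im * ω) with hCdef
  simp only [pow_two, Complex.mul_re, Complex.mul_im, Complex.add_re, Complex.add_im,
    Complex.sub_re, Complex.sub_im, Complex.I_re, Complex.I_im, Complex.ofReal_re,
    Complex.ofReal_im, mul_zero, mul_one, zero_mul, sub_zero, zero_sub, add_zero,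
    zero_add, neg_neg, neg_zero] at him hre
  clear heq hz
  have hs : 0 < s := Real.sin_pos_of_pos_of_lt_pi ha0 (by linarith)
  have hc : 0 < c := Real.cos_pos_of_mem_Ioo ⟨by linarith, by linarith⟩
  have hC : 0 < C := Real.cosh_pos _
  rcases eq_or_ne z.im 0 with hy | hy
  · -- real case
    have hsle : s ≤ 0.7873 := by
      refine le_trans ?_ sin_0_8663_le
      exact Real.sin_le_sin_of_le_of_le_pi_div_two (by linarith) (by linarith) haub.le
    have hsin2 : Real.sin ω * Real.sin ω ≤ 1 := by
      nlinarith [Real.sin_sq_le_one ω]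
    clear him
    have hS0 : S = 0 := by rw [hSdef, hy, zero_mul, Real.sinh_zero]
    have hC1 : C = 1 := by rw [hCdef, hy, zero_mul, Real.cosh_zero]
    rw [hS0, hC1, hy] at hre
    have hx2 : z.re * z.re ≤ 0.3025 := by nlinarith [hx, hxξ]
    have t1 : K * (z.re * z.re) ≤ 0.3025 := by
      nlinarith [mul_nonneg (by linarith : (0:ℝ) ≤ 1 - K) (mul_nonneg hx.le hx.le)]
    have t2 : K * (z.re * z.re) * (Real.sin ω * Real.sin ω) ≤ 0.3025 := by
      nlinarith [mul_nonneg (mul_nonneg hK0.le (mul_nonneg hx.le hx.le))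
        (by nlinarith [Real.sin_sq_le_one ω] : (0:ℝ) ≤ 1 - Real.sin ω * Real.sin ω)]
    have s2 : s * s ≤ 0.62 := by nlinarith [hsle, hs]
    nlinarith [hre, t2, s2, hK₁]
  · -- imaginary case: signs contradict
    clear hre
    have hSy : 0 < S * z.im := by
      rcases lt_or_gt_of_ne hy with h | h
      · have hS : S < 0 := by
          rw [hSdef]; exact Real.sinh_neg_iff.mpr (mul_neg_of_neg_of_pos h hω)
        nlinarith
      · have hS : 0 < S := by
          rw [hSdef]; exact Real.sinh_pos_iff.mpr (mul_pos h hω)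
        nlinarith
    have him' : (s * C * (c * S) + c * S * (s * C)) * z.im =
        -(K * (z.re * z.im + z.im * z.re) * (Real.sin ω * Real.sin ω)) * z.im := by
      rw [him]
    have P1 : 0 < s * c * C * (S * z.im) :=
      mul_pos (mul_pos (mul_pos hs hc) hC) hSy
    have P2 : 0 < K * z.re * (Real.sin ω * Real.sin ω) * (z.im * z.im) := by
      have h2 : 0 < z.im * z.im := mul_self_pos.mpr hy
      positivity
    nlinarith [him', P1, P2]
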